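/- If X is a topological space, μ is a finitely additive probability measure defined on a field of subsets of X, ε > 0, and 𝓕 is a family of measurable sets each of measure at least ε, then the intersection number of 𝓕 is at least ε. Here the intersection number I(𝓕) is the infimum over all finite sequences (F₁,…,Fₙ) of (not necessarily distinct) members of 𝓕 of the quantity i(F⃗)/n, where i(F⃗) is the maximal size of a subset J ⊆ {1,…,n} with ⋂_{j∈J} F_j ≠ ∅. -/
import Mathlib


open scoped Classical

/-- `iNum F` is the maximal size of a set `J` of indices such that `⋂ j ∈ J, F j` is nonempty. -/
noncomputable def iNum {X : Type*} {n : ℕ} (F : Fin n → Set X) : ℕ :=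
  ((Finset.univ : Finset (Fin n)).powerset.filter fun J => (⋂ j ∈ J, F j).Nonempty).sup
    Finset.card

/-- The intersection number of a family of sets: the infimum over nonempty finite sequences
`F : Fin n → Set X` of members of `𝓕` of `iNum F / n`. (Valued in `ℝ≥0∞`; the infimum of the
empty set is `∞`.) -/
noncomputable def interNum {X : Type*} (𝓕 : Set (Set X)) : ENNReal :=
  sInf {r | ∃ (n : ℕ) (F : Fin n → Set X), 0 < n ∧ (∀ j, F j ∈ 𝓕) ∧
    r = (iNum F : ENNReal) / (n : ENNReal)}

/-- If `μ` is a finitely additive probability measure on a field `M` of subsets of `X` and `𝓕`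
is a family of measurable sets each of measure at least `ε > 0`, then the intersection number
of `𝓕` is at least `ε`. -/
theorem stmt0 {X : Type*} (M : Set (Set X)) (μ : Set X → ℝ)
    (hM_univ : Set.univ ∈ M) (hM_compl : ∀ A ∈ M, Aᶜ ∈ M)
    (hM_union : ∀ A ∈ M, ∀ B ∈ M, A ∪ B ∈ M)
    (hμ_nonneg : ∀ A ∈ M, 0 ≤ μ A) (hμ_prob : μ Set.univ = 1)
    (hμ_add : ∀ A ∈ M, ∀ B ∈ M, Disjoint A B → μ (A ∪ B) = μ A + μ B)
    (ε : ℝ) (hε : 0 < ε) (𝓕 : Set (Set X)) (h𝓕 : 𝓕 ⊆ M)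
    (hbig : ∀ F ∈ 𝓕, ε ≤ μ F) :
    ENNReal.ofReal ε ≤ interNum 𝓕 := by
  have hFM : ∀ s ∈ 𝓕, s ∈ M := fun s hs => h𝓕 hs
  have h0 : (∅ : Set X) ∈ M := by simpa using hM_compl _ hM_univ
  have hμ0 : μ ∅ = 0 := by
    have h := hμ_add ∅ h0 ∅ h0 disjoint_bot_left
    simp only [Set.union_self] at h
    linarith
  have hInter2 : ∀ A ∈ M, ∀ B ∈ M, A ∩ B ∈ M := by
    intro A hA B hB
    have h : A ∩ B = (Aᶜ ∪ Bᶜ)ᶜ := by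
      rw [Set.compl_union, compl_compl, compl_compl]
    rw [h]
    exact hM_compl _ (hM_union _ (hM_compl _ hA) _ (hM_compl _ hB))
  have hUnionFin : ∀ {ι : Type} (t : Finset ι) (G : ι → Set X),
      (∀ i ∈ t, G i ∈ M) → (⋃ i ∈ t, G i) ∈ M := by
    intro ι t G
    induction t using Finset.induction_on with
    | empty => intro _; simpa using h0
    | @insert a t ha ih =>
      intro hG
      rw [Finset.set_biUnion_insert]
      exact hM_union _ (hG _ (Finset.mem_insert_self _ _)) _
        (ih fun i hi => hG i (Finset.mem_insert_of_mem hi))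
  have hInterFin : ∀ {ι : Type} (t : Finset ι) (G : ι → Set X),
      (∀ i ∈ t, G i ∈ M) → (⋂ i ∈ t, G i) ∈ M := by
    intro ι t G
    induction t using Finset.induction_on with
    | empty => intro _; simpa using hM_univ
    | @insert a t ha ih =>
      intro hG
      rw [Finset.set_biInter_insert]
      exact hInter2 _ (hG _ (Finset.mem_insert_self _ _)) _
        (ih fun i hi => hG i (Finset.mem_insert_of_mem hi))
  have hAddFin : ∀ {ι : Type} (t : Finset ι) (G : ι → Set X),
      (∀ i ∈ t, G i ∈ M) →
      (∀ i ∈ t, ∀ j ∈ t, i ≠ j → Disjoint (G i) (G j)) →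
      μ (⋃ i ∈ t, G i) = ∑ i ∈ t, μ (G i) := by
    intro ι t G
    induction t using Finset.induction_on with
    | empty => intro _ _; simpa using hμ0
    | @insert a t ha ih =>
      intro hG hdisj
      rw [Finset.set_biUnion_insert, Finset.sum_insert ha,
        hμ_add _ (hG a (Finset.mem_insert_self _ _)) _
          (hUnionFin t G fun i hi => hG i (Finset.mem_insert_of_mem hi))
          (Set.disjoint_iUnion₂_right.mpr fun i hi =>
            hdisj a (Finset.mem_insert_self _ _) i (Finset.mem_insert_of_mem hi)
              (by rintro rfl; exact ha hi)),
        ih (fun i hi => hG i (Finset.mem_insert_of_mem hi))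
          (fun i hi j hj hij => hdisj i (Finset.mem_insert_of_mem hi) j
            (Finset.mem_insert_of_mem hj) hij)]
  refine le_sInf ?_
  rintro r ⟨n, F, hn, hF, rfl⟩
  set k := iNum F with hk
  have key : ε * n ≤ (k : ℝ) := by
    set A : (Fin n → Bool) → Set X := fun s => ⋂ j, if s j then F j else (F j)ᶜ with hA
    have hmem : ∀ (x : X) (s : Fin n → Bool), x ∈ A s ↔ ∀ j, x ∈ F j ↔ s j = true := by
      intro x s
      simp only [hA, Set.mem_iInter]
      constructor
      · intro h j
        have hj := h j
        by_cases hs : s j = true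
        · simp [hs] at hj; simp [hs, hj]
        · simp only [Bool.not_eq_true] at hs
          simp [hs] at hj ⊢
          exact hj
      · intro h j
        by_cases hs : s j = true
        · simp [hs, (h j).mpr hs]
        · simp only [Bool.not_eq_true] at hs
          simp only [hs, Bool.false_eq_true, if_false, Set.mem_compl_iff]
          intro hx
          have := (h j).mp hx
          simp [hs] at this
    have hσ : ∀ x : X, x ∈ A (fun j => decide (x ∈ F j)) := by
      intro x
      rw [hmem]
      intro j
      simp
    have hAM : ∀ s, A s ∈ M := by
      intro s
      have h : A s = ⋂ j ∈ Finset.univ, (if s j then F j else (F j)ᶜ) := by simp [hA]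
      rw [h]
      refine hInterFin _ _ fun j _ => ?_
      by_cases hs : s j = true
      · simpa [hs] using hFM _ (hF j)
      · simp only [Bool.not_eq_true] at hs
        simpa [hs] using hM_compl _ (hFM _ (hF j))
    have hAdisj : ∀ s t : Fin n → Bool, s ≠ t → Disjoint (A s) (A t) := by
      intro s t hst
      rw [Set.disjoint_left]
      intro x hxs hxt
      apply hst
      funext j
      have h1 := (hmem x s).mp hxs j
      have h2 := (hmem x t).mp hxt j
      exact Bool.eq_iff_iff.mpr (h1.symm.trans h2)
    have hsumA : ∑ s : Fin n → Bool, μ (A s) = 1 := by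
      rw [← hAddFin Finset.univ A (fun s _ => hAM s) (fun s _ t _ hst => hAdisj s t hst)]
      have hcover : (⋃ s ∈ (Finset.univ : Finset (Fin n → Bool)), A s) = Set.univ := by
        ext x
        simp only [Set.mem_iUnion, Set.mem_univ, iff_true, Finset.mem_univ, exists_true_left]
        exact ⟨_, hσ x⟩
      rw [hcover, hμ_prob]
    have hFdecomp : ∀ j, μ (F j) =
        ∑ s ∈ Finset.univ.filter (fun s : Fin n → Bool => s j = true), μ (A s) := by
      intro j
      rw [← hAddFin _ A (fun s _ => hAM s) (fun s _ t _ hst => hAdisj s t hst)]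
      congr 1
      ext x
      simp only [Set.mem_iUnion, Finset.mem_filter, Finset.mem_univ, true_and]
      constructor
      · intro hx
        exact ⟨fun i => decide (x ∈ F i), by simpa using hx, hσ x⟩
      · rintro ⟨s, hsj, hxs⟩
        exact ((hmem x s).mp hxs j).mpr hsj
    have hcs : ∀ s : Fin n → Bool, (A s).Nonempty →
        ((Finset.univ.filter fun j => s j = true).card : ℝ) ≤ (k : ℝ) := by
      rintro s ⟨x, hx⟩
      have hJ : (Finset.univ.filter fun j => s j = true) ∈
          (Finset.univ : Finset (Fin n)).powerset.filter
            (fun J => (⋂ j ∈ J, F j).Nonempty) := by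
        simp only [Finset.mem_filter, Finset.mem_powerset]
        refine ⟨Finset.subset_univ _, ⟨x, ?_⟩⟩
        simp only [Set.mem_iInter, Finset.mem_filter, Finset.mem_univ, true_and]
        intro j hj
        exact ((hmem x s).mp hx j).mpr hj
      exact_mod_cast Finset.le_sup (f := Finset.card) hJ
    have hsum : ∑ j, μ (F j) = ∑ s : Fin n → Bool,
        ((Finset.univ.filter fun j => s j = true).card : ℝ) * μ (A s) := by
      calc ∑ j, μ (F j)
          = ∑ j : Fin n, ∑ s ∈ Finset.univ.filter (fun s : Fin n → Bool => s j = true),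
              μ (A s) := Finset.sum_congr rfl fun j _ => hFdecomp j
        _ = ∑ j : Fin n, ∑ s : Fin n → Bool, if s j = true then μ (A s) else 0 := by
            refine Finset.sum_congr rfl fun j _ => ?_
            rw [Finset.sum_filter]
        _ = ∑ s : Fin n → Bool, ∑ j : Fin n, if s j = true then μ (A s) else 0 :=
            Finset.sum_comm
        _ = ∑ s : Fin n → Bool,
              ((Finset.univ.filter fun j => s j = true).card : ℝ) * μ (A s) := by
            refine Finset.sum_congr rfl fun s _ => ?_
            rw [← Finset.sum_filter, Finset.sum_const, nsmul_eq_mul]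
    have h1 : ε * n ≤ ∑ j, μ (F j) := by
      calc ε * n = ∑ _j : Fin n, ε := by simp [mul_comm]
        _ ≤ ∑ j, μ (F j) := Finset.sum_le_sum fun j _ => hbig _ (hF j)
    have h2 : ∑ j, μ (F j) ≤ (k : ℝ) := by
      rw [hsum]
      calc ∑ s : Fin n → Bool,
            ((Finset.univ.filter fun j => s j = true).card : ℝ) * μ (A s)
          ≤ ∑ s : Fin n → Bool, (k : ℝ) * μ (A s) := by
            refine Finset.sum_le_sum fun s _ => ?_
            rcases Set.eq_empty_or_nonempty (A s) with he | hne
            · simp [he, hμ0]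
            · exact mul_le_mul_of_nonneg_right (hcs s hne) (hμ_nonneg _ (hAM s))
        _ = (k : ℝ) := by rw [← Finset.mul_sum, hsumA, mul_one]
    linarith
  have hn' : (n : ENNReal) ≠ 0 := by exact_mod_cast hn.ne'
  rw [ENNReal.le_div_iff_mul_le (Or.inl hn') (Or.inl (ENNReal.natCast_ne_top n))]
  calc ENNReal.ofReal ε * n = ENNReal.ofReal (ε * n) := by
        rw [ENNReal.ofReal_mul hε.le, ENNReal.ofReal_natCast]
    _ ≤ ENNReal.ofReal (k : ℝ) := ENNReal.ofReal_le_ofReal key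
    _ = (k : ENNReal) := ENNReal.ofReal_natCast k
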